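/- Let λ ∈ ℝ with λ ≠ 1, and let I ⊆ ℝ be a nonempty open interval. Then there is no twice continuously differentiable function z : I → ℝ satisfying simultaneously z''(τ) − (1/2)·z'(τ)² − 4·e^{−z(τ)} = 0 and λ·z''(τ) + 4·sinh z(τ) = 0 for all τ ∈ I. -/

import Mathlib

open Real

/-- Algebraic endgame lemma: cancelling `λ` and the nonzero factor `z'` forces `λ = 1`. -/
lemma stmt_8_aux (lam S C E w : ℝ) (h0 : lam ≠ 0) (hE : 0 < E) (hw : w ≠ 0)
    (hkey : 2 * w ^ 1 * (-4 * S / lam) = -(8 / lam) * (C * w) - 8 * (E * -w))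
    (hcs : C - S = E) : lam = 1 := by
  field_simp at hkey
  have h1 : (-(2 * w * (4 * S))) * lam = (-(8 * (C * w)) + lam * (8 * (E * w))) * lam := by
    linear_combination (w * lam) * hkey
  have h1' := mul_right_cancel₀ h0 h1
  have h2 : (8 * (E * w)) * lam = (8 * (E * w)) * 1 := by
    linear_combination -h1' + 8 * w * hcs
  exact mul_left_cancel₀ (by exact mul_ne_zero (by norm_num) (mul_ne_zero hE.ne' hw)) h2

/-- for `λ ≠ 1` there is no twice continuously differentiable function on a
nonempty open interval satisfying simultaneously `z'' − (1/2)z'² − 4e^{−z} = 0` and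
`λ·z'' + 4·sinh z = 0`. -/
theorem stmt_8 (lam : ℝ) (hlam : lam ≠ 1) (I : Set ℝ) (a b : ℝ) (hab : a < b)
    (hI : I = Set.Ioo a b) :
    ¬ ∃ z : ℝ → ℝ, ContDiffOn ℝ 2 z I ∧
      ∀ τ ∈ I,
        deriv (deriv z) τ - (1 / 2) * (deriv z τ) ^ 2 - 4 * Real.exp (-z τ) = 0 ∧
        lam * deriv (deriv z) τ + 4 * Real.sinh (z τ) = 0 := by
  rintro ⟨z, hC, heq⟩
  have hIopen : IsOpen I := by rw [hI]; exact isOpen_Ioo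
  have hC1 : ContDiffOn ℝ 1 (deriv z) I := hC.deriv_of_isOpen hIopen (by norm_num)
  have hz1 : ∀ τ ∈ I, HasDerivAt z (deriv z τ) τ := fun τ hτ =>
    (((hC.differentiableOn (by norm_num)) τ hτ).differentiableAt
      (hIopen.mem_nhds hτ)).hasDerivAt
  have hz2 : ∀ τ ∈ I, HasDerivAt (deriv z) (deriv (deriv z) τ) τ := fun τ hτ =>
    (((hC1.differentiableOn (by norm_num)) τ hτ).differentiableAt
      (hIopen.mem_nhds hτ)).hasDerivAt
  have hc : (a + b) / 2 ∈ I := by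
    rw [hI, Set.mem_Ioo]; constructor <;> linarith
  by_cases h0 : lam = 0
  · subst h0
    have hz0 : ∀ τ ∈ I, z τ = 0 := by
      intro τ hτ
      have h2 := (heq τ hτ).2
      have hs : Real.sinh (z τ) = 0 := by linarith
      exact Real.sinh_eq_zero.mp hs
    have hd0 : ∀ τ ∈ I, deriv z τ = 0 := by
      intro τ hτ
      have h : z =ᶠ[nhds τ] fun _ => (0 : ℝ) :=
        Filter.eventuallyEq_of_mem (hIopen.mem_nhds hτ) hz0
      rw [h.deriv_eq]; simp
    have hdd0 : deriv (deriv z) ((a + b) / 2) = 0 := by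
      have h : deriv z =ᶠ[nhds ((a + b) / 2)] fun _ => (0 : ℝ) :=
        Filter.eventuallyEq_of_mem (hIopen.mem_nhds hc) hd0
      rw [h.deriv_eq]; simp
    have h1 := (heq _ hc).1
    rw [hdd0, hd0 _ hc, hz0 _ hc] at h1
    simp [Real.exp_zero] at h1
  · -- λ ≠ 0
    have hpos : ∀ τ ∈ I, 0 < deriv (deriv z) τ := by
      intro τ hτ
      have h1 := (heq τ hτ).1
      nlinarith [Real.exp_pos (-z τ), sq_nonneg (deriv z τ)]
    have hmono : StrictMonoOn (deriv z) I := by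
      apply strictMonoOn_of_deriv_pos
      · rw [hI]; exact convex_Ioo a b
      · exact hC1.continuousOn
      · intro x hx
        rw [hIopen.interior_eq] at hx
        exact hpos x hx
    -- the algebraic relation obtained by combining both ODEs
    have hrel : ∀ τ ∈ I,
        (deriv z τ) ^ 2 = -(8 / lam) * Real.sinh (z τ) - 8 * Real.exp (-z τ) := by
      intro τ hτ
      obtain ⟨h1, h2⟩ := heq τ hτ
      have hdd : deriv (deriv z) τ = -4 * Real.sinh (z τ) / lam := by
        field_simp; linarith
      rw [hdd] at h1
      field_simp at h1 ⊢
      linarith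
    -- choose a point where deriv z ≠ 0 (possible since z' is strictly monotone)
    have hp : (2 * a + b) / 3 ∈ I := by rw [hI, Set.mem_Ioo]; constructor <;> linarith
    have hq : (a + 2 * b) / 3 ∈ I := by rw [hI, Set.mem_Ioo]; constructor <;> linarith
    have hlt : deriv z ((2 * a + b) / 3) < deriv z ((a + 2 * b) / 3) :=
      hmono hp hq (by linarith)
    obtain ⟨τ₀, hτ₀, hne⟩ : ∃ τ₀ ∈ I, deriv z τ₀ ≠ 0 := by
      rcases ne_or_eq (deriv z ((2 * a + b) / 3)) 0 with h | h
      · exact ⟨_, hp, h⟩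
      · exact ⟨_, hq, by rw [h] at hlt; exact ne_of_gt hlt⟩
    -- differentiate the relation at τ₀
    have hL : HasDerivAt (fun τ => (deriv z τ) ^ 2)
        (2 * deriv z τ₀ ^ 1 * deriv (deriv z) τ₀) τ₀ := (hz2 τ₀ hτ₀).pow 2
    have hR : HasDerivAt (fun τ => -(8 / lam) * Real.sinh (z τ) - 8 * Real.exp (-z τ))
        (-(8 / lam) * (Real.cosh (z τ₀) * deriv z τ₀)
          - 8 * (Real.exp (-z τ₀) * -(deriv z τ₀))) τ₀ := by
      have h1 : HasDerivAt (fun τ => Real.sinh (z τ)) (Real.cosh (z τ₀) * deriv z τ₀) τ₀ :=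
        (hz1 τ₀ hτ₀).sinh
      have h2 : HasDerivAt (fun τ => Real.exp (-z τ))
          (Real.exp (-z τ₀) * -(deriv z τ₀)) τ₀ := (hz1 τ₀ hτ₀).neg.exp
      exact (h1.const_mul (-(8 / lam))).sub (h2.const_mul 8)
    have hLR : HasDerivAt (fun τ => -(8 / lam) * Real.sinh (z τ) - 8 * Real.exp (-z τ))
        (2 * deriv z τ₀ ^ 1 * deriv (deriv z) τ₀) τ₀ := by
      apply hL.congr_of_eventuallyEq
      exact (Filter.eventuallyEq_of_mem (hIopen.mem_nhds hτ₀) hrel).symm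
    have hkey := hLR.unique hR
    -- substitute z'' from the second equation
    have hdd : deriv (deriv z) τ₀ = -4 * Real.sinh (z τ₀) / lam := by
      have h2 := (heq τ₀ hτ₀).2
      field_simp; linarith
    rw [hdd] at hkey
    exact hlam (stmt_8_aux lam (Real.sinh (z τ₀)) (Real.cosh (z τ₀)) (Real.exp (-z τ₀))
      (deriv z τ₀) h0 (Real.exp_pos _) hne hkey (Real.cosh_sub_sinh (z τ₀)))
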